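/- arXiv:1802.06132 — 4 statements merged into one kernel-verified Lean document; each statement's English description precedes it below -/
import Mathlib

section
/- Let A ∈ ℝ^{p×p} and B ∈ ℝ^{q×q} be symmetric positive definite, C ∈ ℝ^{p×q}, K = [[A, C], [-Cᵀ, B]], α = λ_min(diag(A², B²)) and β = λ_max of F := [[A² + CCᵀ, -AC + CB], [-CᵀA + BCᵀ, B² + CᵀC]]. If η = √α/β, then the operator norm satisfies ‖I - ηK‖_op ≤ √(1 - α/β). -/
open Matrix
noncomputable section

/-- Largest eigenvalue (for symmetric matrices: sup of real spectrum). -/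
def lamMax {n : Type*} [Fintype n] [DecidableEq n] (M : Matrix n n ℝ) : ℝ :=
  sSup (spectrum ℝ M)

/-- Smallest eigenvalue (for symmetric matrices: inf of real spectrum). -/
def lamMin {n : Type*} [Fintype n] [DecidableEq n] (M : Matrix n n ℝ) : ℝ :=
  sInf (spectrum ℝ M)

/-- Operator (spectral) norm of a square real matrix. -/
def opNorm {n : Type*} [Fintype n] [DecidableEq n] (M : Matrix n n ℝ) : ℝ :=
  ‖toEuclideanCLM (𝕜 := ℝ) M‖

open Classical in
/-- Positive semidefinite square root (junk value `0` if `M` is not PSD). -/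
def msqrt {n : Type*} [Fintype n] [DecidableEq n] (M : Matrix n n ℝ) : Matrix n n ℝ :=
  if h : M.PosSemidef then (h.1.eigenvectorUnitary : Matrix n n ℝ) *
    diagonal ((↑) ∘ (√·) ∘ h.1.eigenvalues) * (star h.1.eigenvectorUnitary : Matrix n n ℝ) else 0

section Aux

variable {n : Type*} [Fintype n] [DecidableEq n]

lemma smul_one_sub_psd {M : Matrix n n ℝ} (hM : M.IsHermitian) {c : ℝ}
    (h : ∀ i, hM.eigenvalues i ≤ c) : (c • 1 - M).PosSemidef := by
  have hU : (hM.eigenvectorUnitary : Matrix n n ℝ) * star (hM.eigenvectorUnitary : Matrix n n ℝ) = 1 := by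
    simpa using (Matrix.mem_unitaryGroup_iff).mp (hM.eigenvectorUnitary).2
  have hd : diagonal (fun i => c - hM.eigenvalues i)
      = c • 1 - diagonal (RCLike.ofReal ∘ hM.eigenvalues) := by
    rw [smul_one_eq_diagonal, ← diagonal_sub]; rfl
  have key : c • (1 : Matrix n n ℝ) - M = (hM.eigenvectorUnitary : Matrix n n ℝ) *
      diagonal (fun i => c - hM.eigenvalues i) * star (hM.eigenvectorUnitary : Matrix n n ℝ) := by
    rw [hd, Matrix.mul_sub, Matrix.sub_mul, mul_smul_comm, Matrix.smul_mul, Matrix.mul_one, hU,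
      ← Unitary.conjStarAlgAut_apply (S := ℝ), ← hM.spectral_theorem]
  rw [key]
  exact (Matrix.PosSemidef.diagonal (fun i => by simpa using h i)).mul_mul_conjTranspose_same _

lemma sub_smul_one_psd {M : Matrix n n ℝ} (hM : M.IsHermitian) {c : ℝ}
    (h : ∀ i, c ≤ hM.eigenvalues i) : (M - c • 1).PosSemidef := by
  have hU : (hM.eigenvectorUnitary : Matrix n n ℝ) * star (hM.eigenvectorUnitary : Matrix n n ℝ) = 1 := by
    simpa using (Matrix.mem_unitaryGroup_iff).mp (hM.eigenvectorUnitary).2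
  have hd : diagonal (fun i => hM.eigenvalues i - c)
      = diagonal (RCLike.ofReal ∘ hM.eigenvalues) - c • 1 := by
    rw [smul_one_eq_diagonal, ← diagonal_sub]; rfl
  have key : M - c • (1 : Matrix n n ℝ) = (hM.eigenvectorUnitary : Matrix n n ℝ) *
      diagonal (fun i => hM.eigenvalues i - c) * star (hM.eigenvectorUnitary : Matrix n n ℝ) := by
    rw [hd, Matrix.mul_sub, Matrix.sub_mul, mul_smul_comm, Matrix.smul_mul, Matrix.mul_one, hU,
      ← Unitary.conjStarAlgAut_apply (S := ℝ), ← hM.spectral_theorem]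
  rw [key]
  exact (Matrix.PosSemidef.diagonal (fun i => by simpa using h i)).mul_mul_conjTranspose_same _

lemma eig_le_lamMax {M : Matrix n n ℝ} (hM : M.IsHermitian) (i : n) :
    hM.eigenvalues i ≤ lamMax M := by
  rw [lamMax, hM.spectrum_real_eq_range_eigenvalues]
  exact le_csSup ((Set.finite_range _).bddAbove) ⟨i, rfl⟩

lemma lamMin_le_of_mem {M : Matrix n n ℝ} (hM : M.IsHermitian) {x : ℝ}
    (hx : x ∈ spectrum ℝ M) : lamMin M ≤ x := by
  rw [lamMin]
  refine csInf_le ?_ hx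
  rw [hM.spectrum_real_eq_range_eigenvalues]
  exact (Set.finite_range _).bddBelow

lemma lamMax_mem [Nonempty n] {M : Matrix n n ℝ} (hM : M.IsHermitian) :
    ∃ i, lamMax M = hM.eigenvalues i := by
  have h := hM.spectrum_real_eq_range_eigenvalues
  have : lamMax M ∈ spectrum ℝ M := by
    rw [lamMax, h]
    exact (Set.range_nonempty _).csSup_mem (Set.finite_range _)
  rw [h] at this
  obtain ⟨i, hi⟩ := this
  exact ⟨i, hi.symm⟩

lemma lamMin_mem [Nonempty n] {M : Matrix n n ℝ} (hM : M.IsHermitian) :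
    ∃ i, lamMin M = hM.eigenvalues i := by
  have h := hM.spectrum_real_eq_range_eigenvalues
  have : lamMin M ∈ spectrum ℝ M := by
    rw [lamMin, h]
    exact (Set.range_nonempty _).csInf_mem (Set.finite_range _)
  rw [h] at this
  obtain ⟨i, hi⟩ := this
  exact ⟨i, hi.symm⟩

lemma spectrum_mul_self {M : Matrix n n ℝ} (hM : M.IsHermitian) :
    spectrum ℝ (M * M) = Set.range (fun i => hM.eigenvalues i * hM.eigenvalues i) := by
  have hU : star (hM.eigenvectorUnitary : Matrix n n ℝ) * (hM.eigenvectorUnitary : Matrix n n ℝ) = 1 := by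
    simpa using (Matrix.mem_unitaryGroup_iff').mp (hM.eigenvectorUnitary).2
  have key : M * M = (hM.eigenvectorUnitary : Matrix n n ℝ) *
      diagonal (fun i => hM.eigenvalues i * hM.eigenvalues i) *
      star (hM.eigenvectorUnitary : Matrix n n ℝ) := by
    conv_lhs => rw [hM.spectral_theorem]
    simp only [Unitary.conjStarAlgAut_apply, Matrix.mul_assoc]
    rw [← Matrix.mul_assoc (star (hM.eigenvectorUnitary : Matrix n n ℝ)), hU, Matrix.one_mul,
      ← Matrix.mul_assoc (diagonal _), diagonal_mul_diagonal]
    rfl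
  rw [key, Unitary.spectrum_star_right_conjugate, spectrum_diagonal]

open scoped Matrix.Norms.L2Operator in
lemma opNorm_transpose (M : Matrix n n ℝ) : opNorm Mᵀ = opNorm M := by
  rw [opNorm, opNorm, ← Matrix.cstar_norm_def, ← Matrix.cstar_norm_def,
    ← conjTranspose_eq_transpose_of_trivial, Matrix.l2_opNorm_conjTranspose]

lemma opNorm_le_of_psd {M : Matrix n n ℝ} {c : ℝ} (hc : 0 ≤ c)
    (h : ((c • 1 : Matrix n n ℝ) - Mᵀ * M).PosSemidef) : opNorm M ≤ Real.sqrt c := by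
  apply ContinuousLinearMap.opNorm_le_bound _ (Real.sqrt_nonneg c)
  intro x
  set v : n → ℝ := (WithLp.equiv 2 _) x with hv
  have hTx : (WithLp.equiv 2 _) (toEuclideanCLM (𝕜 := ℝ) M x) = M *ᵥ v :=
    rfl
  have hq := h.dotProduct_mulVec_nonneg v
  simp only [star_trivial, RCLike.re_to_real] at hq
  have hq2 : (M *ᵥ v) ⬝ᵥ (M *ᵥ v) ≤ c * (v ⬝ᵥ v) := by
    have : v ⬝ᵥ ((c • 1 - Mᵀ * M) *ᵥ v)
        = c * (v ⬝ᵥ v) - (M *ᵥ v) ⬝ᵥ (M *ᵥ v) := by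
      rw [sub_mulVec, dotProduct_sub, smul_mulVec, one_mulVec, dotProduct_smul,
        ← mulVec_mulVec, dotProduct_mulVec, vecMul_transpose]
      rw [smul_eq_mul]
    linarith [hq, this ▸ hq]
  have hn1 : ‖toEuclideanCLM (𝕜 := ℝ) M x‖ ^ 2 = (M *ᵥ v) ⬝ᵥ (M *ᵥ v) := by
    rw [EuclideanSpace.norm_sq_eq]
    simp [dotProduct, hv, pow_two]
  have hn2 : ‖x‖ ^ 2 = v ⬝ᵥ v := by
    rw [EuclideanSpace.norm_sq_eq]
    simp [dotProduct, hv, pow_two]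
  have hfin : ‖toEuclideanCLM (𝕜 := ℝ) M x‖ ^ 2 ≤ (Real.sqrt c * ‖x‖) ^ 2 := by
    rw [mul_pow, Real.sq_sqrt hc, hn1, hn2]
    exact hq2
  calc ‖toEuclideanCLM (𝕜 := ℝ) M x‖ = Real.sqrt (‖toEuclideanCLM (𝕜 := ℝ) M x‖ ^ 2) := by
        rw [Real.sqrt_sq (norm_nonneg _)]
    _ ≤ Real.sqrt ((Real.sqrt c * ‖x‖) ^ 2) := Real.sqrt_le_sqrt hfin
    _ = Real.sqrt c * ‖x‖ := Real.sqrt_sq (by positivity)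

lemma psd_smul {N : Matrix n n ℝ} (hN : N.PosSemidef) {c : ℝ} (hc : 0 ≤ c) :
    (c • N).PosSemidef := by
  constructor
  · have := hN.1
    rw [IsHermitian, conjTranspose_smul] at *
    rw [hN.1]
    simp
  · exact (hN.smul hc).2

lemma posdef_fromBlocks_diag {m l : Type*} [Fintype m] [Fintype l]
    {A : Matrix m m ℝ} {B : Matrix l l ℝ}
    (hA : A.PosDef) (hB : B.PosDef) : (fromBlocks A 0 0 B).PosDef := by
  refine PosDef.of_dotProduct_mulVec_pos ?_ ?_
  · exact IsHermitian.fromBlocks hA.1 (by simp) hB.1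
  · intro x hx
    simp only [star_trivial, RCLike.re_to_real]
    rw [fromBlocks_mulVec, dotProduct_block]
    simp only [zero_mulVec, add_zero, zero_add, Sum.elim_comp_inl, Sum.elim_comp_inr]
    have hor : x ∘ Sum.inl ≠ 0 ∨ x ∘ Sum.inr ≠ 0 := by
      by_contra h
      push_neg at h
      apply hx
      funext i
      cases i with
      | inl i => exact congrFun h.1 i
      | inr i => exact congrFun h.2 i
    rcases hor with h | h
    · have h1 := hA.dotProduct_mulVec_pos h
      have h2 := hB.posSemidef.dotProduct_mulVec_nonneg (x ∘ Sum.inr)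
      simp only [star_trivial, RCLike.re_to_real] at h1 h2
      linarith
    · have h1 := hA.posSemidef.dotProduct_mulVec_nonneg (x ∘ Sum.inl)
      have h2 := hB.dotProduct_mulVec_pos h
      simp only [star_trivial, RCLike.re_to_real] at h1 h2
      linarith

lemma posdef_mul_transpose_self {K D : Matrix n n ℝ}
    (hsym : K + Kᵀ = (2 : ℝ) • D) (hD : D.PosDef) :
    (K * Kᵀ).PosDef := by
  refine PosDef.of_dotProduct_mulVec_pos ?_ ?_
  · have : (K * Kᵀ)ᴴ = K * Kᵀ := by
      rw [conjTranspose_eq_transpose_of_trivial, transpose_mul, transpose_transpose]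
    exact this
  · intro x hx
    simp only [star_trivial, RCLike.re_to_real]
    have key : x ⬝ᵥ (K * Kᵀ) *ᵥ x = (Kᵀ *ᵥ x) ⬝ᵥ (Kᵀ *ᵥ x) := by
      rw [← mulVec_mulVec, dotProduct_mulVec, ← mulVec_transpose]
    rw [key]
    rcases eq_or_ne (Kᵀ *ᵥ x) 0 with h0 | h0
    · exfalso
      have hq : x ⬝ᵥ (Kᵀ *ᵥ x) = 0 := by rw [h0, dotProduct_zero]
      have h2 : x ⬝ᵥ ((K + Kᵀ) *ᵥ x) = (2:ℝ) * (x ⬝ᵥ (D *ᵥ x)) := by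
        rw [hsym, smul_mulVec, dotProduct_smul, smul_eq_mul]
      have h3 : x ⬝ᵥ (K *ᵥ x) = x ⬝ᵥ (Kᵀ *ᵥ x) := by
        rw [dotProduct_mulVec, ← mulVec_transpose, dotProduct_comm]
      have hDpos := hD.dotProduct_mulVec_pos hx
      simp only [star_trivial, RCLike.re_to_real] at hDpos
      rw [add_mulVec, dotProduct_add, h3, hq] at h2
      linarith
    · have hnn : 0 ≤ (Kᵀ *ᵥ x) ⬝ᵥ (Kᵀ *ᵥ x) := by
        exact Finset.sum_nonneg (fun i _ => mul_self_nonneg ((Kᵀ *ᵥ x) i))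
      rcases hnn.lt_or_eq with hlt | heq
      · exact hlt
      · exact absurd (dotProduct_self_eq_zero.mp heq.symm) h0

end Aux

theorem stmt1 {p q : ℕ} (A : Matrix (Fin p) (Fin p) ℝ) (B : Matrix (Fin q) (Fin q) ℝ)
    (C : Matrix (Fin p) (Fin q) ℝ) (hA : A.PosDef) (hB : B.PosDef)
    (K : Matrix (Fin p ⊕ Fin q) (Fin p ⊕ Fin q) ℝ) (hK : K = fromBlocks A C (-Cᵀ) B)
    (α β η : ℝ)
    (hα : α = lamMin (fromBlocks (A ^ 2) 0 0 (B ^ 2)))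
    (hβ : β = lamMax (fromBlocks (A ^ 2 + C * Cᵀ) (-(A * C) + C * B)
      (-(Cᵀ * A) + B * Cᵀ) (B ^ 2 + Cᵀ * C)))
    (hη : η = Real.sqrt α / β) :
    opNorm (1 - η • K) ≤ Real.sqrt (1 - α / β) := by
  classical
  by_cases hne : Nonempty (Fin p ⊕ Fin q)
  case neg =>
    -- trivial case : empty index type
    have hempty : IsEmpty (Fin p ⊕ Fin q) := not_nonempty_iff.mp hne
    have hT : toEuclideanCLM (𝕜 := ℝ) (1 - η • K) = 0 := by
      ext x i
      exact isEmptyElim i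
    rw [opNorm, hT, norm_zero]
    exact Real.sqrt_nonneg _
  -- main case
  have hAt : Aᵀ = A := by
    rw [← conjTranspose_eq_transpose_of_trivial, hA.1]
  have hBt : Bᵀ = B := by
    rw [← conjTranspose_eq_transpose_of_trivial, hB.1]
  set D : Matrix (Fin p ⊕ Fin q) (Fin p ⊕ Fin q) ℝ := fromBlocks A 0 0 B with hD
  set F : Matrix (Fin p ⊕ Fin q) (Fin p ⊕ Fin q) ℝ := fromBlocks (A ^ 2 + C * Cᵀ) (-(A * C) + C * B)
      (-(Cᵀ * A) + B * Cᵀ) (B ^ 2 + Cᵀ * C) with hF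
  have hDpd : D.PosDef := posdef_fromBlocks_diag hA hB
  have hKt : Kᵀ = fromBlocks A (-C) Cᵀ B := by
    rw [hK, fromBlocks_transpose, hAt, hBt, transpose_neg, transpose_transpose]
  have hKsym : K + Kᵀ = (2 : ℝ) • D := by
    rw [hKt, hK, hD, fromBlocks_add, two_smul, fromBlocks_add]
    congr 1 <;> simp
  have hKKt : K * Kᵀ = F := by
    rw [hKt, hK, hF, fromBlocks_multiply,
      show A * A + C * Cᵀ = A ^ 2 + C * Cᵀ by rw [sq],
      show A * (-C) + C * B = -(A * C) + C * B by rw [Matrix.mul_neg],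
      show (-Cᵀ) * A + B * Cᵀ = -(Cᵀ * A) + B * Cᵀ by rw [Matrix.neg_mul],
      show (-Cᵀ) * (-C) + B * B = B ^ 2 + Cᵀ * C by
        rw [Matrix.neg_mul, Matrix.mul_neg, neg_neg, ← sq, add_comm]]
  have hDD : D * D = fromBlocks (A ^ 2) 0 0 (B ^ 2) := by
    simp [hD, fromBlocks_multiply, pow_two]
  have hFpd : F.PosDef := hKKt ▸ posdef_mul_transpose_self hKsym hDpd
  have hFher : F.IsHermitian := hFpd.1
  have hDher : D.IsHermitian := hDpd.1
  have hDDher : (D * D).IsHermitian := by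
    rw [IsHermitian, conjTranspose_mul, hDher.eq]
  -- β is positive
  obtain ⟨i₀⟩ := id hne
  have hβpos : 0 < β := by
    calc (0:ℝ) < hFher.eigenvalues i₀ := hFpd.eigenvalues_pos i₀
      _ ≤ lamMax F := eig_le_lamMax hFher i₀
      _ = β := by rw [hβ, hF]
  have hβ0 : β ≠ 0 := ne_of_gt hβpos
  -- α is nonnegative
  have hαDD : α = lamMin (D * D) := by rw [hα, hDD]
  have hα0 : 0 ≤ α := by
    obtain ⟨i, hi⟩ := lamMin_mem hDDher
    rw [hαDD, hi]
    have hpsd : (D * D).PosSemidef := by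
      have : D * D = Dᴴ * D := by rw [hDher.eq]
      rw [this]
      exact posSemidef_conjTranspose_mul_self D
    exact hpsd.eigenvalues_nonneg i
  set s : ℝ := Real.sqrt α with hs
  have hs2 : s * s = α := Real.mul_self_sqrt hα0
  have hs0 : 0 ≤ s := Real.sqrt_nonneg α
  have hη0 : 0 ≤ η := by rw [hη]; positivity
  -- (D - s • 1) is PSD
  have hsD : (D - s • 1).PosSemidef := by
    apply sub_smul_one_psd hDher
    intro i
    have hmem : hDher.eigenvalues i * hDher.eigenvalues i ∈ spectrum ℝ (D * D) :=
      (spectrum_mul_self hDher) ▸ ⟨i, rfl⟩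
    have hle : α ≤ hDher.eigenvalues i * hDher.eigenvalues i := by
      rw [hαDD]
      exact lamMin_le_of_mem hDDher hmem
    have hpos : 0 < hDher.eigenvalues i := hDpd.eigenvalues_pos i
    nlinarith [Real.sq_sqrt hα0, Real.sqrt_nonneg α]
  -- (β • 1 - F) is PSD
  have hβF : ((β • 1 : Matrix (Fin p ⊕ Fin q) (Fin p ⊕ Fin q) ℝ) - F).PosSemidef := by
    apply smul_one_sub_psd hFher
    intro i
    calc hFher.eigenvalues i ≤ lamMax F := eig_le_lamMax hFher i
      _ = β := by rw [hβ, hF]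
  -- expansion of (1 - ηK)(1 - ηK)ᵀ
  set M : Matrix (Fin p ⊕ Fin q) (Fin p ⊕ Fin q) ℝ := 1 - η • K with hM
  have hMt : Mᵀ = 1 - η • Kᵀ := by
    rw [hM, transpose_sub, transpose_one, transpose_smul]
  have hMMt : M * Mᵀ = 1 - (2 * η) • D + (η * η) • F := by
    rw [hM, hMt]
    have e1 : ((1 : Matrix (Fin p ⊕ Fin q) (Fin p ⊕ Fin q) ℝ) - η • K) * (1 - η • Kᵀ)
        = 1 - η • (K + Kᵀ) + (η * η) • (K * Kᵀ) := by
      simp only [sub_eq_add_neg, Matrix.add_mul, Matrix.mul_add, Matrix.one_mul,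
        Matrix.mul_one, Matrix.smul_mul, Matrix.mul_smul, smul_smul, smul_add,
        neg_add, neg_neg, neg_smul, smul_neg, neg_mul, mul_neg]
      abel
    rw [e1, hKsym, hKKt, smul_smul]
    ring_nf
  -- the key PSD decomposition
  have hkey : ((1 - α / β) • 1 : Matrix (Fin p ⊕ Fin q) (Fin p ⊕ Fin q) ℝ) - M * Mᵀ
      = (2 * η) • (D - s • 1) + (η ^ 2) • ((β • 1 : Matrix (Fin p ⊕ Fin q) (Fin p ⊕ Fin q) ℝ) - F) := by
    rw [hMMt]
    have hc1 : η ^ 2 * β = α / β := by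
      rw [hη]
      field_simp
      rw [← hs2]; ring
    have hc2 : 2 * η * s = 2 * (α / β) := by
      rw [hη]
      field_simp
      rw [← hs2]; ring
    linear_combination (norm := module)
      hc2 • (1 : Matrix (Fin p ⊕ Fin q) (Fin p ⊕ Fin q) ℝ)
      - hc1 • (1 : Matrix (Fin p ⊕ Fin q) (Fin p ⊕ Fin q) ℝ)
  have hpsd : (((1 - α / β) • 1 : Matrix (Fin p ⊕ Fin q) (Fin p ⊕ Fin q) ℝ) - M * Mᵀ).PosSemidef := by
    rw [hkey]
    exact (psd_smul hsD (by positivity)).add (psd_smul hβF (by positivity))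
  -- 1 - α/β is nonnegative
  have hc0 : 0 ≤ 1 - α / β := by
    have hMMtpsd : (M * Mᵀ).PosSemidef := by
      have : M * Mᵀ = M * Mᴴ := by rw [conjTranspose_eq_transpose_of_trivial]
      rw [this]
      exact posSemidef_self_mul_conjTranspose M
    have hsum : (((1 - α / β) • 1 : Matrix (Fin p ⊕ Fin q) (Fin p ⊕ Fin q) ℝ)).PosSemidef := by
      have : ((1 - α / β) • 1 : Matrix (Fin p ⊕ Fin q) (Fin p ⊕ Fin q) ℝ)
          = (((1 - α / β) • 1 : Matrix (Fin p ⊕ Fin q) (Fin p ⊕ Fin q) ℝ) - M * Mᵀ) + M * Mᵀ := by abel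
      rw [this]
      exact hpsd.add hMMtpsd
    have := hsum.dotProduct_mulVec_nonneg (Pi.single i₀ 1)
    simp only [star_trivial, RCLike.re_to_real, smul_mulVec, one_mulVec,
      dotProduct_smul, smul_eq_mul] at this
    have hone : (Pi.single i₀ 1 : Fin p ⊕ Fin q → ℝ) ⬝ᵥ (Pi.single i₀ 1) = 1 := by
      simp [dotProduct, Pi.single_apply]
    rw [hone, mul_one] at this
    exact this
  -- conclude
  have := opNorm_le_of_psd (M := Mᵀ) hc0 (by rwa [transpose_transpose])
  rwa [opNorm_transpose] at this
end
end

section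
/- Let C ∈ ℝ^{p×p} be full rank, γ > 0, and η = γλ_min(CCᵀ)/(λ_max(CCᵀ) + γ²λ_max(CCᵀ)²). Then λ_max((I - ηγCCᵀ)² + η²CCᵀ) ≤ 1 - γ²λ_min(CCᵀ)²/(γ²λ_max(CCᵀ)² + λ_max(CCᵀ)). -/
open Matrix Pointwise
noncomputable section

lemma herm_smul {n : Type*} [Fintype n] [DecidableEq n] {A : Matrix n n ℝ}
    (c : ℝ) (hA : A.IsHermitian) : (c • A).IsHermitian := by
  unfold Matrix.IsHermitian
  rw [conjTranspose_smul, hA.eq, star_trivial]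

lemma psd_smul_s13 {n : Type*} [Fintype n] [DecidableEq n] {A : Matrix n n ℝ}
    (hA : A.PosSemidef) {c : ℝ} (hc : 0 ≤ c) : (c • A).PosSemidef := by
  refine ⟨herm_smul c hA.isHermitian, fun x => ?_⟩
  have h := hA.2 x
  exact (hA.smul hc).2 x

lemma spectrum_nonneg_of_psd {n : Type*} [Fintype n] [DecidableEq n] {B : Matrix n n ℝ}
    (hB : B.PosSemidef) : ∀ x ∈ spectrum ℝ B, 0 ≤ x := by
  intro x hx
  rw [hB.isHermitian.spectrum_real_eq_range_eigenvalues] at hx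
  obtain ⟨i, rfl⟩ := hx
  exact hB.eigenvalues_nonneg i

lemma psd_smul_one_sub {n : Type*} [Fintype n] [DecidableEq n] {A : Matrix n n ℝ}
    (hA : A.IsHermitian) {c : ℝ} (hc : ∀ x ∈ spectrum ℝ A, x ≤ c) :
    (c • (1 : Matrix n n ℝ) - A).PosSemidef := by
  have hherm : (c • (1 : Matrix n n ℝ) - A).IsHermitian :=
    (herm_smul c isHermitian_one).sub hA
  simp only [hherm.posSemidef_iff_eigenvalues_nonneg, Pi.le_def, Pi.zero_apply]
  intro i
  have hmem : (hherm.eigenvalues i : ℝ) ∈ ({c} : Set ℝ) - spectrum ℝ A := by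
    rw [spectrum.singleton_sub_eq,
      show (algebraMap ℝ (Matrix n n ℝ) c - A) = c • (1 : Matrix n n ℝ) - A from by
        rw [Algebra.algebraMap_eq_smul_one]]
    exact hherm.eigenvalues_mem_spectrum_real i
  obtain ⟨a, ha, b, hb, hab⟩ := hmem
  rw [Set.mem_singleton_iff] at ha
  have h2 : a - b = hherm.eigenvalues i := hab
  rw [← h2, ha]
  linarith [hc b hb]

lemma psd_sub_smul_one {n : Type*} [Fintype n] [DecidableEq n] {A : Matrix n n ℝ}
    (hA : A.IsHermitian) {c : ℝ} (hc : ∀ x ∈ spectrum ℝ A, c ≤ x) :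
    (A - c • (1 : Matrix n n ℝ)).PosSemidef := by
  have hherm : (A - c • (1 : Matrix n n ℝ)).IsHermitian :=
    hA.sub (herm_smul c isHermitian_one)
  simp only [hherm.posSemidef_iff_eigenvalues_nonneg, Pi.le_def, Pi.zero_apply]
  intro i
  have hmem : (hherm.eigenvalues i : ℝ) ∈ spectrum ℝ A - ({c} : Set ℝ) := by
    rw [spectrum.sub_singleton_eq,
      show (A - algebraMap ℝ (Matrix n n ℝ) c) = A - c • (1 : Matrix n n ℝ) from by
        rw [Algebra.algebraMap_eq_smul_one]]
    exact hherm.eigenvalues_mem_spectrum_real i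
  obtain ⟨a, ha, b, hb, hab⟩ := hmem
  rw [Set.mem_singleton_iff] at hb
  have h2 : a - b = hherm.eigenvalues i := hab
  rw [← h2, hb]
  linarith [hc a ha]

lemma lamMax_le_of_psd {n : Type*} [Fintype n] [DecidableEq n] [Nonempty n]
    {M : Matrix n n ℝ} (hM : M.IsHermitian) {c : ℝ}
    (hG : (c • (1 : Matrix n n ℝ) - M).PosSemidef) : sSup (spectrum ℝ M) ≤ c := by
  apply csSup_le
  · exact ⟨hM.eigenvalues (Classical.arbitrary n), hM.eigenvalues_mem_spectrum_real _⟩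
  · intro x hx
    have hmem : c - x ∈ spectrum ℝ (c • (1 : Matrix n n ℝ) - M) := by
      rw [show c • (1 : Matrix n n ℝ) - M = algebraMap ℝ (Matrix n n ℝ) c - M from by
            rw [Algebra.algebraMap_eq_smul_one], ← spectrum.singleton_sub_eq]
      exact Set.sub_mem_sub rfl hx
    have h0 := spectrum_nonneg_of_psd hG _ hmem
    linarith

theorem stmt13 {p : ℕ} (C : Matrix (Fin p) (Fin p) ℝ) (hC : C.rank = p) (γ η : ℝ)
    (hγ : 0 < γ)
    (hη : η = γ * lamMin (C * Cᵀ) / (lamMax (C * Cᵀ) + γ ^ 2 * lamMax (C * Cᵀ) ^ 2)) :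
    lamMax ((1 - (η * γ) • (C * Cᵀ)) ^ 2 + (η ^ 2) • (C * Cᵀ)) ≤
      1 - γ ^ 2 * lamMin (C * Cᵀ) ^ 2 / (γ ^ 2 * lamMax (C * Cᵀ) ^ 2 + lamMax (C * Cᵀ)) := by
  rcases Nat.eq_zero_or_pos p with hp | hp
  · -- trivial case p = 0
    subst hp
    haveI : Subsingleton (Matrix (Fin 0) (Fin 0) ℝ) :=
      ⟨fun a b => by ext i; exact i.elim0⟩
    have hempty : ∀ M : Matrix (Fin 0) (Fin 0) ℝ, spectrum ℝ M = ∅ := by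
      intro M
      rw [Set.eq_empty_iff_forall_notMem]
      intro x hx
      exact (spectrum.mem_iff.mp hx) (isUnit_of_subsingleton _)
    simp only [lamMax, lamMin, hempty, Real.sSup_empty, Real.sInf_empty]
    norm_num
  · haveI : Nonempty (Fin p) := ⟨⟨0, hp⟩⟩
    set A := C * Cᵀ with hAdef
    have hCH : Cᴴ = Cᵀ := conjTranspose_eq_transpose_of_trivial C
    have hAh : A.IsHermitian := by
      have := isHermitian_mul_conjTranspose_self C
      rwa [hCH] at this
    have hApsd : A.PosSemidef := by
      have := posSemidef_self_mul_conjTranspose C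
      rwa [hCH] at this
    -- C is invertible
    have hCu : IsUnit C := by
      rw [← Matrix.mulVec_injective_iff_isUnit]
      have hrange : LinearMap.range C.mulVecLin = ⊤ := by
        apply Submodule.eq_top_of_finrank_eq
        rw [Module.finrank_fintype_fun_eq_card, Fintype.card_fin]
        exact hC
      have hsurj : Function.Surjective C.mulVecLin := LinearMap.range_eq_top.mp hrange
      have hinj : Function.Injective C.mulVecLin :=
        (LinearMap.injective_iff_surjective).mpr hsurj
      exact hinj
    have hAu : IsUnit A := hCu.mul ((Matrix.isUnit_transpose C).mpr hCu)
    -- spectrum facts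
    have hfin : (spectrum ℝ A).Finite := A.finite_real_spectrum
    have hne : (spectrum ℝ A).Nonempty :=
      ⟨hAh.eigenvalues (Classical.arbitrary (Fin p)), hAh.eigenvalues_mem_spectrum_real _⟩
    set m := lamMin A with hmdef
    set ℓ := lamMax A with hldef
    have hm_mem : m ∈ spectrum ℝ A := hne.csInf_mem hfin
    have hl_mem : ℓ ∈ spectrum ℝ A := hne.csSup_mem hfin
    have hlow : ∀ x ∈ spectrum ℝ A, m ≤ x := fun x hx => csInf_le hfin.bddBelow hx
    have hhigh : ∀ x ∈ spectrum ℝ A, x ≤ ℓ := fun x hx => le_csSup hfin.bddAbove hx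
    have hm_nonneg : 0 ≤ m := spectrum_nonneg_of_psd hApsd m hm_mem
    have hm_pos : 0 < m := by
      rcases hm_nonneg.lt_or_eq with h | h
      · exact h
      · exact absurd (h ▸ hm_mem) (spectrum.zero_notMem ℝ hAu)
    have hml : m ≤ ℓ := hlow ℓ hl_mem
    have hl_pos : 0 < ℓ := hm_pos.trans_le hml
    -- scalar setup
    have hd_pos : 0 < ℓ + γ ^ 2 * ℓ ^ 2 := by positivity
    have hd_pos' : 0 < γ ^ 2 * ℓ ^ 2 + ℓ := by positivity
    set c : ℝ := 1 - γ ^ 2 * m ^ 2 / (γ ^ 2 * ℓ ^ 2 + ℓ) with hcdef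
    -- key scalar inequalities
    have hβ : 0 ≤ 2 * η * γ - η ^ 2 * γ ^ 2 * ℓ - η ^ 2 := by
      have e : 2 * η * γ - η ^ 2 * γ ^ 2 * ℓ - η ^ 2
          = (γ ^ 2 * m) * (2 * (ℓ + γ ^ 2 * ℓ ^ 2) - γ ^ 2 * m * ℓ - m)
            / (ℓ + γ ^ 2 * ℓ ^ 2) ^ 2 := by
        rw [hη]; field_simp
      rw [e]
      apply div_nonneg _ (by positivity)
      apply mul_nonneg (by positivity)
      nlinarith [mul_nonneg (mul_nonneg (sq_nonneg γ) hl_pos.le) (sub_nonneg.mpr hml)]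
    have hα : 0 ≤ (c - 1) + (2 * η * γ - η ^ 2 * γ ^ 2 * ℓ - η ^ 2) * m := by
      have e : (c - 1) + (2 * η * γ - η ^ 2 * γ ^ 2 * ℓ - η ^ 2) * m
          = γ ^ 2 * m ^ 2 * (ℓ - m) * (1 + γ ^ 2 * ℓ) / (ℓ + γ ^ 2 * ℓ ^ 2) ^ 2 := by
        rw [hcdef, hη]; field_simp; ring
      rw [e]
      apply div_nonneg _ (by positivity)
      have h1 : (0:ℝ) ≤ ℓ - m := sub_nonneg.mpr hml
      positivity
    -- PSD pieces
    have hBl : ((ℓ : ℝ) • (1 : Matrix (Fin p) (Fin p) ℝ) - A).PosSemidef :=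
      psd_smul_one_sub hAh hhigh
    have hBm : (A - m • (1 : Matrix (Fin p) (Fin p) ℝ)).PosSemidef :=
      psd_sub_smul_one hAh hlow
    obtain ⟨S, hSh, hSS⟩ : ∃ S : Matrix (Fin p) (Fin p) ℝ, S.IsHermitian ∧ S * S = A := by
      open scoped MatrixOrder in
      exact ⟨CFC.sqrt A, (CFC.sqrt_nonneg A).posSemidef.isHermitian,
        CFC.sqrt_mul_sqrt_self A hApsd.nonneg⟩
    have hAA : ((ℓ : ℝ) • A - A * A).PosSemidef := by
      have hconj := hBl.mul_mul_conjTranspose_same S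
      rw [hSh.eq] at hconj
      have hid : S * ((ℓ : ℝ) • (1 : Matrix (Fin p) (Fin p) ℝ) - A) * S
          = (ℓ : ℝ) • A - A * A := by
        rw [mul_sub, sub_mul, mul_smul_comm, mul_one, smul_mul_assoc, hSS,
          ← hSS, show S * (S * S) * S = S * S * (S * S) from by noncomm_ring]
      rwa [hid] at hconj
    -- decomposition identity
    set M := (1 - (η * γ) • A) ^ 2 + (η ^ 2) • A with hMdef
    have hGdec : c • (1 : Matrix (Fin p) (Fin p) ℝ) - M
        = (η ^ 2 * γ ^ 2) • ((ℓ : ℝ) • A - A * A)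
          + (2 * η * γ - η ^ 2 * γ ^ 2 * ℓ - η ^ 2) • (A - m • (1 : Matrix (Fin p) (Fin p) ℝ))
          + ((c - 1) + (2 * η * γ - η ^ 2 * γ ^ 2 * ℓ - η ^ 2) * m)
              • (1 : Matrix (Fin p) (Fin p) ℝ) := by
      have hsq : (1 - (η * γ) • A) ^ 2
          = 1 - (2 * (η * γ)) • A + ((η * γ) ^ 2) • (A * A) := by
        simp only [pow_two, mul_sub, sub_mul, one_mul, mul_one, smul_mul_assoc, mul_smul_comm,
          smul_smul]
        module
      rw [hMdef, hsq]
      module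
    have hG : (c • (1 : Matrix (Fin p) (Fin p) ℝ) - M).PosSemidef := by
      rw [hGdec]
      exact ((psd_smul_s13 hAA (by positivity)).add (psd_smul_s13 hBm hβ)).add
        (psd_smul_s13 Matrix.PosSemidef.one hα)
    -- M is Hermitian
    have hMh : M.IsHermitian := by
      rw [hMdef]
      exact (((isHermitian_one).sub (herm_smul _ hAh)).pow 2).add (herm_smul _ hAh)
    have := lamMax_le_of_psd hMh hG
    calc lamMax M ≤ c := this
      _ = 1 - γ ^ 2 * m ^ 2 / (γ ^ 2 * ℓ ^ 2 + ℓ) := hcdef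
end
end

section
/- Let C ∈ ℝ^{p×p} be full rank, γ > 0, η = γλ_min(CCᵀ)/(λ_max(CCᵀ) + γ²λ_max(CCᵀ)²), and consider the iterates z_{t+1} = [[I - ηγCCᵀ, -ηC], [ηCᵀ, I - ηγCᵀC]]z_t with ‖z₀‖ ≤ r. Then ‖z_T‖ ≤ ε whenever T ≥ ⌈2·((γ²λ_max(CCᵀ)² + λ_max(CCᵀ))/(γ²λ_min(CCᵀ)²))·log(r/ε)⌉. -/
open Matrix
noncomputable section

lemma aux_psd {n : Type*} [Fintype n] [DecidableEq n] {A : Matrix n n ℝ}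
    (hA : A.IsHermitian) (a b c : ℝ)
    (h : ∀ μ ∈ spectrum ℝ A, 0 ≤ a + b * μ + c * μ ^ 2) :
    (a • (1 : Matrix n n ℝ) + b • A + c • (A * A)).PosSemidef := by
  set U : Matrix n n ℝ := ↑(hA.eigenvectorUnitary) with hUdef
  have hU : U * star U = 1 := Unitary.coe_mul_star_self hA.eigenvectorUnitary
  have hU' : star U * U = 1 := Unitary.coe_star_mul_self hA.eigenvectorUnitary
  set d : n → ℝ := hA.eigenvalues with hddef
  have hd : ∀ i, 0 ≤ a + b * d i + c * d i ^ 2 := fun i =>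
    h _ (hA.eigenvalues_mem_spectrum_real i)
  have hAe : A = U * Matrix.diagonal d * star U := by
    simpa [Function.comp] using hA.spectral_theorem
  have key : a • (1 : Matrix n n ℝ) + b • A + c • (A * A)
      = U * Matrix.diagonal (fun i => a + b * d i + c * d i ^ 2) * star U := by
    have hdiag : Matrix.diagonal (fun i => a + b * d i + c * d i ^ 2)
        = a • (1 : Matrix n n ℝ) + b • Matrix.diagonal d
          + c • (Matrix.diagonal d * Matrix.diagonal d) := by
      rw [diagonal_mul_diagonal, ← diagonal_one, ← diagonal_smul, ← diagonal_smul,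
        ← diagonal_smul, diagonal_add, diagonal_add]
      congr 1 <;> funext i <;> simp [mul_comm, sq]
    have hsq : A * A = U * (Matrix.diagonal d * Matrix.diagonal d) * star U := by
      conv_lhs => rw [hAe]
      calc (U * Matrix.diagonal d * star U) * (U * Matrix.diagonal d * star U)
          = U * (Matrix.diagonal d * ((star U * U) * (Matrix.diagonal d * star U))) := by
            simp only [Matrix.mul_assoc]
        _ = U * (Matrix.diagonal d * Matrix.diagonal d) * star U := by
            rw [hU', Matrix.one_mul]; simp only [Matrix.mul_assoc]
    rw [hdiag, Matrix.mul_add, Matrix.mul_add, Matrix.add_mul, Matrix.add_mul,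
      Matrix.mul_smul, Matrix.mul_smul, Matrix.mul_smul, Matrix.smul_mul, Matrix.smul_mul,
      Matrix.smul_mul, Matrix.mul_one, hU, ← hAe, ← hsq]
  rw [key]
  have := (Matrix.PosSemidef.diagonal (R := ℝ) (d := fun i => a + b * d i + c * d i ^ 2)
    hd).mul_mul_conjTranspose_same U
  rw [Matrix.star_eq_conjTranspose]
  simpa using this

lemma psd_fromBlocks {m n : Type*} [Fintype m] [Fintype n] [DecidableEq m] [DecidableEq n]
    {D₁ : Matrix m m ℝ} {D₂ : Matrix n n ℝ} (h₁ : D₁.PosSemidef) (h₂ : D₂.PosSemidef) :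
    (fromBlocks D₁ 0 0 D₂).PosSemidef := by
  refine Matrix.PosSemidef.of_dotProduct_mulVec_nonneg ?_ ?_
  · unfold Matrix.IsHermitian
    rw [fromBlocks_conjTranspose, h₁.1, h₂.1]
    simp
  · intro x
    rw [fromBlocks_mulVec, dotProduct_block]
    simp only [Sum.elim_comp_inl, Sum.elim_comp_inr, zero_mulVec, add_zero, zero_add]
    have := h₁.dotProduct_mulVec_nonneg (x ∘ Sum.inl)
    have := h₂.dotProduct_mulVec_nonneg (x ∘ Sum.inr)
    simp only [star_trivial] at *
    positivity

lemma norm_apply_le {n : Type*} [Fintype n] [DecidableEq n] (K : Matrix n n ℝ) (c : ℝ)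
    (hc : 0 ≤ c) (h : ((c ^ 2) • (1 : Matrix n n ℝ) - Kᵀ * K).PosSemidef)
    (v : EuclideanSpace ℝ n) :
    ‖toEuclideanCLM (𝕜 := ℝ) K v‖ ≤ c * ‖v‖ := by
  set x : n → ℝ := WithLp.equiv 2 _ v with hx
  have hKv : WithLp.equiv 2 _ (toEuclideanCLM (𝕜 := ℝ) K v) = K *ᵥ x :=
    rfl
  have hnv : ‖v‖ ^ 2 = x ⬝ᵥ x := by
    rw [← real_inner_self_eq_norm_sq, EuclideanSpace.inner_eq_star_dotProduct]
    simp [hx]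
  have hnKv : ‖toEuclideanCLM (𝕜 := ℝ) K v‖ ^ 2 = (K *ᵥ x) ⬝ᵥ (K *ᵥ x) := by
    rw [← real_inner_self_eq_norm_sq, EuclideanSpace.inner_eq_star_dotProduct]
    simp [hx]
  have hq := h.dotProduct_mulVec_nonneg x
  rw [sub_mulVec, smul_mulVec, one_mulVec, dotProduct_sub, star_trivial,
    dotProduct_smul, ← mulVec_mulVec, dotProduct_mulVec, ← mulVec_transpose,
    transpose_transpose] at hq
  have key : ‖toEuclideanCLM (𝕜 := ℝ) K v‖ ^ 2 ≤ (c * ‖v‖) ^ 2 := by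
    rw [hnKv, mul_pow, hnv]
    have h2 : (K *ᵥ x) ⬝ᵥ (K *ᵥ x) ≤ c ^ 2 * (x ⬝ᵥ x) := by
      have := sub_nonneg.mp hq
      simpa [smul_eq_mul] using hq
    linarith [h2]
  have h1 : (0:ℝ) ≤ ‖toEuclideanCLM (𝕜 := ℝ) K v‖ := norm_nonneg _
  have h2 : (0:ℝ) ≤ c * ‖v‖ := by positivity
  nlinarith

set_option maxHeartbeats 2000000 in
theorem stmt15 {p : ℕ} (C : Matrix (Fin p) (Fin p) ℝ) (hC : C.rank = p) (γ η r ε : ℝ)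
    (hγ : 0 < γ) (hε : 0 < ε)
    (hη : η = γ * lamMin (C * Cᵀ) / (lamMax (C * Cᵀ) + γ ^ 2 * lamMax (C * Cᵀ) ^ 2))
    (K : Matrix (Fin p ⊕ Fin p) (Fin p ⊕ Fin p) ℝ)
    (hK : K = fromBlocks (1 - (η * γ) • (C * Cᵀ)) (-(η • C))
      (η • Cᵀ) (1 - (η * γ) • (Cᵀ * C)))
    (z : ℕ → EuclideanSpace ℝ (Fin p ⊕ Fin p))
    (hz : ∀ t, z (t + 1) = toEuclideanCLM (𝕜 := ℝ) K (z t))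
    (h0 : ‖z 0‖ ≤ r) :
    ∀ T : ℕ,
      ⌈2 * ((γ ^ 2 * lamMax (C * Cᵀ) ^ 2 + lamMax (C * Cᵀ)) / (γ ^ 2 * lamMin (C * Cᵀ) ^ 2)) *
        Real.log (r / ε)⌉ ≤ (T : ℤ) → ‖z T‖ ≤ ε := by
  intro T hT
  rcases Nat.eq_zero_or_pos p with hp | hp
  · subst hp
    haveI : Subsingleton (EuclideanSpace ℝ (Fin 0 ⊕ Fin 0)) :=
      ⟨fun a b => PiLp.ext fun i => by rcases i with i | i <;> exact i.elim0⟩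
    have hzT : z T = 0 := Subsingleton.elim _ _
    rw [hzT, norm_zero]
    exact hε.le
  haveI : Nonempty (Fin p) := ⟨⟨0, hp⟩⟩
  set L := lamMin (C * Cᵀ) with hLdef
  set M := lamMax (C * Cᵀ) with hMdef
  -- C is a unit
  have hCu : IsUnit C := by
    rw [← Matrix.mulVec_surjective_iff_isUnit]
    have hrange : LinearMap.range C.mulVecLin = ⊤ := by
      apply Submodule.eq_top_of_finrank_eq
      rw [show Module.finrank ℝ ↥(LinearMap.range C.mulVecLin) = C.rank from rfl, hC]
      simp [Module.finrank_fintype_fun_eq_card]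
    intro y
    obtain ⟨w, hw⟩ := LinearMap.range_eq_top.mp hrange y
    exact ⟨w, hw⟩
  have hCtu : IsUnit Cᵀ := (Matrix.isUnit_transpose (A := C)).mpr hCu
  -- A = C Cᵀ is positive definite
  have hApd : (C * Cᵀ).PosDef := by
    refine Matrix.PosDef.of_dotProduct_mulVec_pos ?_ (fun x hx => ?_)
    · have := Matrix.isHermitian_mul_conjTranspose_self C
      simpa [Matrix.conjTranspose_eq_transpose_of_trivial] using this
    · have hinj := Matrix.mulVec_injective_iff_isUnit.mpr hCtu
      have hw : Cᵀ *ᵥ x ≠ 0 := fun h => hx (hinj (h.trans (Matrix.mulVec_zero Cᵀ).symm))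
      have h2 : star x ⬝ᵥ ((C * Cᵀ) *ᵥ x) = (Cᵀ *ᵥ x) ⬝ᵥ (Cᵀ *ᵥ x) := by
        rw [star_trivial, ← Matrix.mulVec_mulVec, Matrix.dotProduct_mulVec,
          ← Matrix.mulVec_transpose]
      rw [h2]
      exact Matrix.dotProduct_star_self_pos_iff.mpr hw
  have hBpd : (Cᵀ * C).PosDef := by
    refine Matrix.PosDef.of_dotProduct_mulVec_pos ?_ (fun x hx => ?_)
    · have := Matrix.isHermitian_mul_conjTranspose_self Cᵀ
      simpa [Matrix.conjTranspose_eq_transpose_of_trivial] using this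
    · have hinj := Matrix.mulVec_injective_iff_isUnit.mpr hCu
      have hw : C *ᵥ x ≠ 0 := fun h => hx (hinj (h.trans (Matrix.mulVec_zero C).symm))
      have h2 : star x ⬝ᵥ ((Cᵀ * C) *ᵥ x) = (C *ᵥ x) ⬝ᵥ (C *ᵥ x) := by
        rw [star_trivial, ← Matrix.mulVec_mulVec, Matrix.dotProduct_mulVec,
          ← Matrix.mulVec_transpose, transpose_transpose]
      rw [h2]
      exact Matrix.dotProduct_star_self_pos_iff.mpr hw
  -- spectra agree
  have hspec : spectrum ℝ (Cᵀ * C) = spectrum ℝ (C * Cᵀ) := by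
    obtain ⟨u, hu⟩ := hCu
    have key : (↑u : Matrix (Fin p) (Fin p) ℝ) * (Cᵀ * C) *
        (↑u⁻¹ : Matrix (Fin p) (Fin p) ℝ) = C * Cᵀ := by
      have h1 : C * (↑u⁻¹ : Matrix (Fin p) (Fin p) ℝ) = 1 := by
        rw [← hu]; exact_mod_cast u.mul_inv
      calc (↑u : Matrix (Fin p) (Fin p) ℝ) * (Cᵀ * C) * (↑u⁻¹ : Matrix (Fin p) (Fin p) ℝ)
          = (C * Cᵀ) * (C * (↑u⁻¹ : Matrix (Fin p) (Fin p) ℝ)) := by rw [hu]; noncomm_ring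
        _ = C * Cᵀ := by rw [h1, Matrix.mul_one]
    rw [← key, spectrum.units_conjugate]
  -- spectrum facts
  have hfin : (spectrum ℝ (C * Cᵀ)).Finite := Matrix.finite_real_spectrum
  have hne : (spectrum ℝ (C * Cᵀ)).Nonempty := by
    rw [hApd.1.spectrum_real_eq_range_eigenvalues]
    exact Set.range_nonempty _
  have hLmem : L ∈ spectrum ℝ (C * Cᵀ) := hne.csInf_mem hfin
  have hMmem : M ∈ spectrum ℝ (C * Cᵀ) := hne.csSup_mem hfin
  have hlow : ∀ μ ∈ spectrum ℝ (C * Cᵀ), L ≤ μ := fun μ hμ => csInf_le hfin.bddBelow hμ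
  have hup : ∀ μ ∈ spectrum ℝ (C * Cᵀ), μ ≤ M := fun μ hμ => le_csSup hfin.bddAbove hμ
  have hLpos : 0 < L := by
    rw [hApd.1.spectrum_real_eq_range_eigenvalues] at hLmem
    obtain ⟨i, hi⟩ := hLmem
    exact hi ▸ hApd.eigenvalues_pos i
  have hLM : L ≤ M := hup L hLmem
  have hMpos : 0 < M := lt_of_lt_of_le hLpos hLM
  -- scalar facts about η
  have hdpos : (0:ℝ) < M + γ ^ 2 * M ^ 2 := by positivity
  have hηpos : 0 < η := by rw [hη]; exact div_pos (mul_pos hγ hLpos) hdpos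
  have hηM : η * (M + γ ^ 2 * M ^ 2) = γ * L := by
    rw [hη]; field_simp
  have hηγ : η * (1 + γ ^ 2 * M) ≤ γ := by
    nlinarith [mul_le_mul_of_nonneg_left hLM hγ.le, hMpos]
  have hxid : (η * γ * L) * (M + γ ^ 2 * M ^ 2) = γ ^ 2 * L ^ 2 := by
    linear_combination (γ * L) * hηM
  set c2 : ℝ := 1 - η * γ * L with hc2def
  have hc2 : 0 ≤ c2 := by
    nlinarith [hxid, hdpos, hMpos,
      mul_le_mul_of_nonneg_left (mul_le_mul hLM hLM hLpos.le hMpos.le) (sq_nonneg γ)]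
  -- quadratic nonnegativity on the spectrum
  have hquad : ∀ μ ∈ spectrum ℝ (C * Cᵀ),
      0 ≤ (c2 - 1) + (2 * (η * γ) - η ^ 2) * μ + (-(η ^ 2 * γ ^ 2)) * μ ^ 2 := by
    intro μ hμ
    have h1 := hlow μ hμ
    have h2 := hup μ hμ
    have hμpos : 0 < μ := lt_of_lt_of_le hLpos h1
    have h3 : η + η * γ ^ 2 * μ ≤ γ := by
      nlinarith [mul_le_mul_of_nonneg_left h2 (mul_nonneg hηpos.le (sq_nonneg γ))]
    have h4 : η * μ * (η + η * γ ^ 2 * μ) ≤ η * μ * γ :=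
      mul_le_mul_of_nonneg_left h3 (mul_nonneg hηpos.le hμpos.le)
    have h5 : η * γ * L ≤ η * γ * μ :=
      mul_le_mul_of_nonneg_left h1 (mul_pos hηpos hγ).le
    rw [hc2def]
    nlinarith [h4, h5]
  -- block structure of Kᵀ * K
  set A := C * Cᵀ with hAdef
  set B := Cᵀ * C with hBdef
  set P : Matrix (Fin p) (Fin p) ℝ := 1 - (η * γ) • A with hPdef
  set Q : Matrix (Fin p) (Fin p) ℝ := 1 - (η * γ) • B with hQdef
  have hPt : Pᵀ = P := by
    rw [hPdef, transpose_sub, transpose_smul, transpose_one, hAdef, transpose_mul,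
      transpose_transpose]
  have hQt : Qᵀ = Q := by
    rw [hQdef, transpose_sub, transpose_smul, transpose_one, hBdef, transpose_mul,
      transpose_transpose]
  have hKt : Kᵀ = fromBlocks P (η • C) (-(η • Cᵀ)) Q := by
    rw [hK, fromBlocks_transpose, hPt, hQt, transpose_neg, transpose_smul, transpose_smul,
      transpose_transpose]
  have hPC : P * C = C * Q := by
    rw [hPdef, hQdef, Matrix.sub_mul, Matrix.mul_sub, Matrix.one_mul, Matrix.mul_one,
      Matrix.smul_mul, Matrix.mul_smul, hAdef, hBdef, Matrix.mul_assoc]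
  have hCtP : Cᵀ * P = Q * Cᵀ := by
    have := congrArg Matrix.transpose hPC
    rw [transpose_mul, transpose_mul, hPt, hQt] at this
    exact this
  have hKtK : Kᵀ * K = fromBlocks (P * P + (η ^ 2) • A) 0 0 (Q * Q + (η ^ 2) • B) := by
    rw [hKt, hK, fromBlocks_multiply, fromBlocks_inj]
    refine ⟨?_, ?_, ?_, ?_⟩
    · rw [Matrix.smul_mul, Matrix.mul_smul, smul_smul, ← hAdef, sq]
    · rw [Matrix.mul_neg, Matrix.mul_smul, Matrix.smul_mul, hPC, neg_add_cancel]
    · rw [Matrix.neg_mul, Matrix.smul_mul, Matrix.mul_smul, hCtP, neg_add_cancel]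
    · rw [Matrix.neg_mul, Matrix.mul_neg, neg_neg, Matrix.smul_mul, Matrix.mul_smul,
        smul_smul, ← hBdef, sq, add_comm]
  have hsplit : c2 • (1 : Matrix (Fin p ⊕ Fin p) (Fin p ⊕ Fin p) ℝ) - Kᵀ * K
      = fromBlocks (c2 • 1 - (P * P + (η ^ 2) • A)) 0 0 (c2 • 1 - (Q * Q + (η ^ 2) • B)) := by
    rw [hKtK, ← fromBlocks_one, fromBlocks_smul, sub_eq_add_neg, fromBlocks_neg,
      fromBlocks_add]
    simp [sub_eq_add_neg]
  have hexpand : ∀ (X : Matrix (Fin p) (Fin p) ℝ),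
      (1 - (η * γ) • X) * (1 - (η * γ) • X)
        = 1 - (2 * (η * γ)) • X + ((η * γ) ^ 2) • (X * X) := by
    intro X
    simp only [Matrix.sub_mul, Matrix.mul_sub, Matrix.one_mul, Matrix.mul_one,
      Matrix.smul_mul, Matrix.mul_smul, smul_smul]
    module
  have hD1 : (c2 • (1 : Matrix (Fin p) (Fin p) ℝ) - (P * P + (η ^ 2) • A)).PosSemidef := by
    have hpsd := aux_psd hApd.1 (c2 - 1) (2 * (η * γ) - η ^ 2) (-(η ^ 2 * γ ^ 2)) (by
      intro μ hμ
      have := hquad μ hμ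
      nlinarith [this])
    have : c2 • (1 : Matrix (Fin p) (Fin p) ℝ) - (P * P + (η ^ 2) • A)
        = (c2 - 1) • (1 : Matrix (Fin p) (Fin p) ℝ) + (2 * (η * γ) - η ^ 2) • A
          + (-(η ^ 2 * γ ^ 2)) • (A * A) := by
      rw [hPdef, hexpand A]
      have h9 : ((η * γ) ^ 2 : ℝ) = η ^ 2 * γ ^ 2 := by ring
      rw [h9]
      module
    rw [this]
    exact hpsd
  have hD2 : (c2 • (1 : Matrix (Fin p) (Fin p) ℝ) - (Q * Q + (η ^ 2) • B)).PosSemidef := by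
    have hpsd := aux_psd hBpd.1 (c2 - 1) (2 * (η * γ) - η ^ 2) (-(η ^ 2 * γ ^ 2)) (by
      intro μ hμ
      have hμ' : μ ∈ spectrum ℝ A := by rw [← hspec]; exact hμ
      have := hquad μ hμ'
      nlinarith [this])
    have : c2 • (1 : Matrix (Fin p) (Fin p) ℝ) - (Q * Q + (η ^ 2) • B)
        = (c2 - 1) • (1 : Matrix (Fin p) (Fin p) ℝ) + (2 * (η * γ) - η ^ 2) • B
          + (-(η ^ 2 * γ ^ 2)) • (B * B) := by
      rw [hQdef, hexpand B]
      have h9 : ((η * γ) ^ 2 : ℝ) = η ^ 2 * γ ^ 2 := by ring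
      rw [h9]
      module
    rw [this]
    exact hpsd
  set c : ℝ := Real.sqrt c2 with hcdef
  have hcnn : 0 ≤ c := Real.sqrt_nonneg _
  have hcsq : c ^ 2 = c2 := Real.sq_sqrt hc2
  have hPSD : ((c ^ 2) • (1 : Matrix (Fin p ⊕ Fin p) (Fin p ⊕ Fin p) ℝ)
      - Kᵀ * K).PosSemidef := by
    rw [hcsq, hsplit]
    exact psd_fromBlocks hD1 hD2
  -- iteration
  have hr0 : (0:ℝ) ≤ r := le_trans (norm_nonneg _) h0
  have hiter : ∀ t : ℕ, ‖z t‖ ≤ c ^ t * r := by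
    intro t
    induction t with
    | zero => simpa using h0
    | succ t ih =>
      rw [hz t]
      calc ‖toEuclideanCLM (𝕜 := ℝ) K (z t)‖ ≤ c * ‖z t‖ :=
            norm_apply_le K c hcnn hPSD (z t)
        _ ≤ c * (c ^ t * r) := mul_le_mul_of_nonneg_left ih hcnn
        _ = c ^ (t + 1) * r := by ring
  refine le_trans (hiter T) ?_
  -- final arithmetic
  rcases le_or_gt r ε with hrε | hrε
  · have hc1 : c ≤ 1 := Real.sqrt_le_one.mpr (by nlinarith [mul_pos (mul_pos hηpos hγ) hLpos])
    calc c ^ T * r ≤ 1 * r := by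
          apply mul_le_mul_of_nonneg_right _ hr0
          exact pow_le_one₀ hcnn hc1
      _ = r := one_mul r
      _ ≤ ε := hrε
  · have hrpos : 0 < r := lt_trans hε hrε
    have hlogpos : 0 < Real.log (r / ε) := Real.log_pos ((one_lt_div hε).mpr hrε)
    have hTa : 2 * ((γ ^ 2 * M ^ 2 + M) / (γ ^ 2 * L ^ 2)) * Real.log (r / ε) ≤ (T:ℝ) := by
      have h1 := Int.le_ceil (2 * ((γ ^ 2 * M ^ 2 + M) / (γ ^ 2 * L ^ 2)) * Real.log (r / ε))
      have h2 : ((⌈2 * ((γ ^ 2 * M ^ 2 + M) / (γ ^ 2 * L ^ 2)) * Real.log (r / ε)⌉ : ℤ) : ℝ)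
          ≤ (T : ℝ) := by exact_mod_cast hT
      linarith
    have hxT : 2 * Real.log (r / ε) ≤ (η * γ * L) * T := by
      have hmul := mul_le_mul_of_nonneg_left hTa
        (mul_pos (mul_pos hηpos hγ) hLpos).le
      have hid : (η * γ * L) * (2 * ((γ ^ 2 * M ^ 2 + M) / (γ ^ 2 * L ^ 2))
          * Real.log (r / ε)) = 2 * Real.log (r / ε) := by
        have hden : (γ ^ 2 * L ^ 2 : ℝ) ≠ 0 := by positivity
        field_simp
        linear_combination hηM
      rw [hid] at hmul
      exact hmul
    have hcle : c ≤ Real.exp (-(η * γ * L) / 2) := by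
      rw [Real.exp_half]
      apply Real.sqrt_le_sqrt
      have := Real.add_one_le_exp (-(η * γ * L))
      linarith
    have hcT : c ^ T ≤ ε / r := by
      calc c ^ T ≤ (Real.exp (-(η * γ * L) / 2)) ^ T := pow_le_pow_left₀ hcnn hcle T
        _ = Real.exp (-(η * γ * L) / 2 * T) := by
            rw [← Real.exp_nat_mul]; ring_nf
        _ ≤ Real.exp (Real.log (ε / r)) := by
            apply Real.exp_le_exp.mpr
            have hlg : Real.log (ε / r) = - Real.log (r / ε) := by
              rw [← Real.log_inv]
              congr 1
              field_simp
            rw [hlg]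
            nlinarith [hxT]
        _ = ε / r := Real.exp_log (by positivity)
    calc c ^ T * r ≤ (ε / r) * r := mul_le_mul_of_nonneg_right hcT hr0
      _ = ε := by field_simp
end
end

section
/- Let C ∈ ℝ^{p×p} be full rank and η = 1/√(λ_max(CCᵀ)). Consider the implicit update dynamics (I + ηJ)z_{t+1} = z_t with J = [[0,C],[-Cᵀ,0]], z₀ with ‖z₀‖ ≤ r. Then ‖z_{t+1}‖ ≤ (1 - (1 - 1/√2)·λ_min(CCᵀ)/λ_max(CCᵀ))·‖z_t‖ for all t, and consequently ‖z_T‖ ≤ ε whenever T ≥ ⌈(2+√2)·(λ_max(CCᵀ)/λ_min(CCᵀ))·log(r/ε)⌉. -/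
open Matrix
noncomputable section

section Aux

variable {n : Type*} [Fintype n] [DecidableEq n]

lemma aux_lamMin_le {M : Matrix n n ℝ} (hA : M.IsHermitian) (i : n) :
    lamMin M ≤ hA.eigenvalues i := by
  refine csInf_le ((Set.toFinite _).bddBelow) ?_
  rw [hA.spectrum_real_eq_range_eigenvalues]
  exact ⟨i, rfl⟩

lemma aux_lamMin_mem [Nonempty n] {M : Matrix n n ℝ} (hA : M.IsHermitian) :
    lamMin M ∈ spectrum ℝ M := by
  have hfin : (spectrum ℝ M).Finite := Set.toFinite _
  have hne : (spectrum ℝ M).Nonempty := by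
    rw [hA.spectrum_real_eq_range_eigenvalues]
    exact Set.range_nonempty _
  exact hne.csInf_mem hfin

lemma aux_lamMax_mem [Nonempty n] {M : Matrix n n ℝ} (hA : M.IsHermitian) :
    lamMax M ∈ spectrum ℝ M := by
  have hfin : (spectrum ℝ M).Finite := Set.toFinite _
  have hne : (spectrum ℝ M).Nonempty := by
    rw [hA.spectrum_real_eq_range_eigenvalues]
    exact Set.range_nonempty _
  exact hne.csSup_mem hfin

lemma aux_lamMin_le_lamMax [Nonempty n] {M : Matrix n n ℝ} (hA : M.IsHermitian) :
    lamMin M ≤ lamMax M :=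
  csInf_le ((Set.toFinite _).bddBelow) (aux_lamMax_mem hA)

lemma aux_lamMin_pos [Nonempty n] {M : Matrix n n ℝ} (hM : M.PosDef) :
    0 < lamMin M := by
  have h := aux_lamMin_mem hM.isHermitian
  rw [hM.isHermitian.spectrum_real_eq_range_eigenvalues] at h
  obtain ⟨i, hi⟩ := h
  exact hi ▸ hM.eigenvalues_pos i

lemma aux_psd_sub_lamMin [Nonempty n] {M : Matrix n n ℝ} (hA : M.IsHermitian) :
    (M - lamMin M • 1).PosSemidef := by
  set c := lamMin M
  set U : Matrix n n ℝ := (hA.eigenvectorUnitary : Matrix n n ℝ)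
  have hUU : U * star U = 1 := Matrix.mem_unitaryGroup_iff.mp hA.eigenvectorUnitary.2
  have hdiag : (diagonal (fun i => hA.eigenvalues i - c)).PosSemidef :=
    posSemidef_diagonal_iff.mpr fun i => sub_nonneg.mpr (aux_lamMin_le hA i)
  have h := hdiag.mul_mul_conjTranspose_same U
  have hkey : U * diagonal (fun i => hA.eigenvalues i - c) * Uᴴ = M - c • 1 := by
    have hspec : M = U * diagonal (RCLike.ofReal ∘ hA.eigenvalues) * star U :=
      hA.spectral_theorem
    rw [RCLike.ofReal_real_eq_id] at hspec
    have hd : diagonal (fun i => hA.eigenvalues i - c)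
        = diagonal (id ∘ hA.eigenvalues) - c • 1 := by
      rw [smul_one_eq_diagonal, ← diagonal_sub]
      rfl
    rw [star_eq_conjTranspose] at hspec hUU
    rw [hd, mul_sub, sub_mul, ← hspec]
    congr 1
    rw [mul_smul_comm, mul_one, smul_mul_assoc, hUU]
  rwa [hkey] at h


lemma aux_psd_blocks {m : Type*} [Fintype m] [DecidableEq m]
    {A : Matrix n n ℝ} {B : Matrix m m ℝ} (hA : A.PosSemidef) (hB : B.PosSemidef) :
    (fromBlocks A 0 0 B).PosSemidef := by
  refine .of_dotProduct_mulVec_nonneg ?_ fun x => ?_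
  · unfold IsHermitian
    rw [fromBlocks_conjTranspose, hA.1.eq, hB.1.eq]
    simp
  · have h1 := hA.dotProduct_mulVec_nonneg (x ∘ Sum.inl)
    have h2 := hB.dotProduct_mulVec_nonneg (x ∘ Sum.inr)
    have e : star x ⬝ᵥ (fromBlocks A 0 0 B *ᵥ x)
        = star (x ∘ Sum.inl) ⬝ᵥ (A *ᵥ (x ∘ Sum.inl))
          + star (x ∘ Sum.inr) ⬝ᵥ (B *ᵥ (x ∘ Sum.inr)) := by
      simp [dotProduct, fromBlocks_mulVec, Fintype.sum_sum_type]
    rw [e]; exact add_nonneg h1 h2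

lemma aux_quad {M : Matrix n n ℝ} {c : ℝ} (h : (M - c • 1).PosSemidef) (w : n → ℝ) :
    c * (w ⬝ᵥ w) ≤ w ⬝ᵥ (M *ᵥ w) := by
  have h2 := h.dotProduct_mulVec_nonneg w
  simp only [star_trivial, sub_mulVec, smul_mulVec, one_mulVec, dotProduct_sub,
    dotProduct_smul, smul_eq_mul] at h2
  linarith

lemma aux_dot_self_nonneg (w : n → ℝ) : 0 ≤ w ⬝ᵥ w :=
  Finset.sum_nonneg fun i _ => mul_self_nonneg _

end Aux

set_option maxHeartbeats 1000000 in
theorem stmt17 {p : ℕ} (C : Matrix (Fin p) (Fin p) ℝ) (hC : C.rank = p) (η r ε : ℝ)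
    (hε : 0 < ε) (hη : η = 1 / Real.sqrt (lamMax (C * Cᵀ)))
    (J : Matrix (Fin p ⊕ Fin p) (Fin p ⊕ Fin p) ℝ) (hJ : J = fromBlocks 0 C (-Cᵀ) 0)
    (z : ℕ → EuclideanSpace ℝ (Fin p ⊕ Fin p))
    (hz : ∀ t, toEuclideanCLM (𝕜 := ℝ) (1 + η • J) (z (t + 1)) = z t)
    (h0 : ‖z 0‖ ≤ r) :
    (∀ t, ‖z (t + 1)‖ ≤
      (1 - (1 - 1 / Real.sqrt 2) * (lamMin (C * Cᵀ) / lamMax (C * Cᵀ))) * ‖z t‖) ∧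
    ∀ T : ℕ,
      ⌈(2 + Real.sqrt 2) * (lamMax (C * Cᵀ) / lamMin (C * Cᵀ)) * Real.log (r / ε)⌉ ≤ (T : ℤ) →
        ‖z T‖ ≤ ε := by
  by_cases hp : p = 0
  · subst hp
    have hzz : ∀ t, z t = 0 := fun t => Subsingleton.elim _ _
    constructor
    · intro t; rw [hzz t, hzz (t+1), norm_zero, mul_zero]
    · intro T _; rw [hzz T, norm_zero]; exact hε.le
  have hpp : Nonempty (Fin p) := ⟨⟨0, Nat.pos_of_ne_zero hp⟩⟩
  -- C is a unit
  have hCu : IsUnit C := by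
    have hsurj : Function.Surjective C.mulVecLin := by
      rw [← LinearMap.range_eq_top]
      apply Submodule.eq_top_of_finrank_eq
      rw [Matrix.rank] at hC
      rw [hC, Module.finrank_fintype_fun_eq_card, Fintype.card_fin]
    have hinj : Function.Injective C.mulVecLin :=
      (LinearMap.injective_iff_surjective).mpr hsurj
    rw [← Matrix.mulVec_injective_iff_isUnit]
    simpa [Matrix.coe_mulVecLin] using hinj
  -- positive definiteness
  have hMh : (C * Cᵀ).IsHermitian := by
    have h := isHermitian_mul_conjTranspose_self C
    rwa [conjTranspose_eq_transpose_of_trivial] at h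
  have hMh' : (Cᵀ * C).IsHermitian := by
    have h := isHermitian_conjTranspose_mul_self C
    rwa [conjTranspose_eq_transpose_of_trivial] at h
  have hM : (C * Cᵀ).PosDef := by
    refine .of_dotProduct_mulVec_pos hMh fun x hx => ?_
    have hx' : Cᵀ *ᵥ x ≠ 0 := by
      intro h0'
      apply hx
      have hinjT : Function.Injective (Cᵀ).mulVec :=
        Matrix.mulVec_injective_iff_isUnit.mpr ((Matrix.isUnit_transpose C).mpr hCu)
      have : Cᵀ *ᵥ x = Cᵀ *ᵥ 0 := by rw [h0', Matrix.mulVec_zero]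
      exact hinjT this
    have heq : star x ⬝ᵥ ((C * Cᵀ) *ᵥ x) = (Cᵀ *ᵥ x) ⬝ᵥ (Cᵀ *ᵥ x) := by
      rw [star_trivial, ← Matrix.mulVec_mulVec, Matrix.dotProduct_mulVec,
        ← Matrix.mulVec_transpose]
    rw [heq]
    rcases lt_or_eq_of_le (aux_dot_self_nonneg (Cᵀ *ᵥ x)) with h | h
    · exact h
    · exact absurd ((dotProduct_self_eq_zero).mp h.symm) hx'
  have hlmin : 0 < lamMin (C * Cᵀ) := aux_lamMin_pos hM
  have hle : lamMin (C * Cᵀ) ≤ lamMax (C * Cᵀ) := aux_lamMin_le_lamMax hMh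
  have hlmax : 0 < lamMax (C * Cᵀ) := lt_of_lt_of_le hlmin hle
  -- spectra of CᵀC and CCᵀ agree
  have hspec' : lamMin (Cᵀ * C) = lamMin (C * Cᵀ) := by
    obtain ⟨u, hu⟩ := hCu
    have hconj : (↑u⁻¹ : Matrix (Fin p) (Fin p) ℝ) * (C * Cᵀ) * (↑u : Matrix (Fin p) (Fin p) ℝ) = Cᵀ * C := by
      have h1 : (↑u⁻¹ : Matrix (Fin p) (Fin p) ℝ) * C = 1 := by rw [← hu]; exact u.inv_mul
      calc (↑u⁻¹ : Matrix (Fin p) (Fin p) ℝ) * (C * Cᵀ) * (↑u : Matrix (Fin p) (Fin p) ℝ)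
          = ((↑u⁻¹ : Matrix (Fin p) (Fin p) ℝ) * C) * (Cᵀ * (↑u : Matrix (Fin p) (Fin p) ℝ)) := by
            simp only [mul_assoc]
        _ = Cᵀ * C := by rw [h1, one_mul, hu]
    unfold lamMin
    rw [← hconj, spectrum.units_conjugate']
  set lmin := lamMin (C * Cᵀ) with hlmindef
  set lmax := lamMax (C * Cᵀ) with hlmaxdef
  set K : Matrix (Fin p ⊕ Fin p) (Fin p ⊕ Fin p) ℝ := fromBlocks (C * Cᵀ) 0 0 (Cᵀ * C)
    with hKdef
  have hpsdK : (K - lmin • 1).PosSemidef := by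
    have h1 : (C * Cᵀ - lmin • 1).PosSemidef := aux_psd_sub_lamMin hMh
    have h2 : (Cᵀ * C - lmin • 1).PosSemidef := by
      have h := aux_psd_sub_lamMin hMh'
      rwa [hspec'] at h
    have h3 := aux_psd_blocks h1 h2
    have h4 : fromBlocks (C * Cᵀ - lmin • 1) 0 0 (Cᵀ * C - lmin • 1) = K - lmin • 1 := by
      rw [hKdef, show (1 : Matrix (Fin p ⊕ Fin p) (Fin p ⊕ Fin p) ℝ)
        = fromBlocks 1 0 0 1 from fromBlocks_one.symm, fromBlocks_smul,
        sub_eq_add_neg, sub_eq_add_neg, sub_eq_add_neg, fromBlocks_neg, fromBlocks_add]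
      simp
    rwa [h4] at h3
  have hquad : ∀ w : (Fin p ⊕ Fin p) → ℝ, lmin * (w ⬝ᵥ w) ≤ w ⬝ᵥ (K *ᵥ w) :=
    fun w => aux_quad hpsdK w
  -- the matrix identity
  have hJt : Jᵀ = -J := by
    rw [hJ, fromBlocks_transpose, fromBlocks_neg]
    simp
  have hJJ : J * J = -K := by
    rw [hJ, hKdef, fromBlocks_multiply, fromBlocks_neg]
    simp [Matrix.mul_neg, Matrix.neg_mul]
  have hPtP : (1 + η • J)ᵀ * (1 + η • J) = 1 + (η^2) • K := by
    rw [transpose_add, transpose_one, transpose_smul, hJt, smul_neg]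
    have expand : ∀ a : Matrix (Fin p ⊕ Fin p) (Fin p ⊕ Fin p) ℝ,
        (1 + -a) * (1 + a) = 1 - a * a := by intro a; noncomm_ring
    have expand := expand (η • J)
    rw [expand, smul_mul_smul_comm, hJJ, smul_neg, sub_neg_eq_add, pow_two]
  have hη2 : η ^ 2 = 1 / lmax := by
    rw [hη, div_pow, one_pow, Real.sq_sqrt hlmax.le]
  -- the quadratic step inequality
  have hstep : ∀ w : (Fin p ⊕ Fin p) → ℝ,
      (1 + lmin / lmax) * (w ⬝ᵥ w) ≤ ((1 + η • J) *ᵥ w) ⬝ᵥ ((1 + η • J) *ᵥ w) := by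
    intro w
    have e1 : ((1 + η • J) *ᵥ w) ⬝ᵥ ((1 + η • J) *ᵥ w)
        = w ⬝ᵥ w + η ^ 2 * (w ⬝ᵥ (K *ᵥ w)) := by
      rw [Matrix.dotProduct_mulVec, ← Matrix.mulVec_transpose, Matrix.mulVec_mulVec, hPtP,
        Matrix.add_mulVec, Matrix.one_mulVec, Matrix.smul_mulVec,
        add_dotProduct, smul_dotProduct, dotProduct_comm (K *ᵥ w) w,
        smul_eq_mul]
    have e2 := hquad w
    have hmul := mul_le_mul_of_nonneg_left e2 (le_of_lt (by positivity : (0:ℝ) < 1 / lmax))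
    rw [e1, hη2]
    have hrw : (1 + lmin / lmax) * (w ⬝ᵥ w)
        = w ⬝ᵥ w + 1 / lmax * (lmin * (w ⬝ᵥ w)) := by
      field_simp
    rw [hrw]
    linarith
  -- numeric facts
  have hs2 : Real.sqrt 2 * Real.sqrt 2 = 2 := Real.mul_self_sqrt (by norm_num)
  have hs1 : 1 < Real.sqrt 2 := by nlinarith [Real.sqrt_nonneg 2]
  have hκ0 : 0 < lmin / lmax := div_pos hlmin hlmax
  have hκ1 : lmin / lmax ≤ 1 := (div_le_one hlmax).mpr hle
  set ρ : ℝ := 1 - (1 - 1 / Real.sqrt 2) * (lmin / lmax) with hρdef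
  have ha0 : 0 < 1 - 1 / Real.sqrt 2 := by
    have : 1 / Real.sqrt 2 < 1 := by
      rw [div_lt_one (by linarith)]; exact hs1
    linarith
  have ha1 : 1 - 1 / Real.sqrt 2 < 1 := by
    have : 0 < 1 / Real.sqrt 2 := by positivity
    linarith
  have hρpos : 0 < ρ := by
    rw [hρdef]
    nlinarith
  have hρlt1 : ρ < 1 := by
    rw [hρdef]
    nlinarith
  have hρsq : 1 ≤ ρ ^ 2 * (1 + lmin / lmax) := by
    have hhalf : (1:ℝ) / Real.sqrt 2 = Real.sqrt 2 / 2 := by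
      rw [div_eq_div_iff (by positivity : (Real.sqrt 2) ≠ 0) (by norm_num : (2:ℝ) ≠ 0)]
      linarith [hs2]
    rw [hρdef, hhalf]
    set t := lmin / lmax with htdef
    have h32 : 0 ≤ 3 - 2 * Real.sqrt 2 := by nlinarith [hs2, hs1]
    have h45 : 5 ≤ 4 * Real.sqrt 2 := by nlinarith [hs2, hs1]
    have h3 : 0 ≤ (3 - 2 * Real.sqrt 2) * (1 - t) :=
      mul_nonneg h32 (by linarith)
    have hfac : 0 ≤ 2 * Real.sqrt 2 - 2 - 3 * t + 2 * Real.sqrt 2 * t := by linarith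
    have hH : 0 ≤ t * (1 - t) * (2 * Real.sqrt 2 - 2 - 3 * t + 2 * Real.sqrt 2 * t) :=
      mul_nonneg (mul_nonneg hκ0.le (by linarith)) hfac
    have e1 : (Real.sqrt 2 * Real.sqrt 2 - 2) * t = 0 := by rw [hs2]; ring
    have e2 : (Real.sqrt 2 * Real.sqrt 2 - 2) * t ^ 2 = 0 := by rw [hs2]; ring
    have e3 : (Real.sqrt 2 * Real.sqrt 2 - 2) * t ^ 3 = 0 := by rw [hs2]; ring
    nlinarith [hH, e1, e2, e3, hs2]
  -- norm identity
  have hnorm : ∀ x : EuclideanSpace ℝ (Fin p ⊕ Fin p),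
      (WithLp.equiv 2 ((Fin p ⊕ Fin p) → ℝ) x) ⬝ᵥ (WithLp.equiv 2 ((Fin p ⊕ Fin p) → ℝ) x)
        = ‖x‖ ^ 2 := by
    intro x
    rw [← real_inner_self_eq_norm_sq]
    simp [PiLp.inner_apply, RCLike.inner_apply, dotProduct]
    rw [EuclideanSpace.norm_sq_eq, Fintype.sum_sum_type]
    simp only [Real.norm_eq_abs, sq_abs]
    simp only [sq]
  -- contraction step
  have hcontract : ∀ t, ‖z (t + 1)‖ ≤ ρ * ‖z t‖ := by
    intro t
    have hv := congrArg (WithLp.equiv 2 ((Fin p ⊕ Fin p) → ℝ)) (hz t)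
    change (1 + η • J) *ᵥ (WithLp.equiv 2 _ (z (t + 1))) = WithLp.equiv 2 _ (z t) at hv
    have hkey := hstep (WithLp.equiv 2 ((Fin p ⊕ Fin p) → ℝ) (z (t + 1)))
    rw [hv, hnorm, hnorm] at hkey
    -- hkey : (1 + lmin/lmax) * ‖z (t+1)‖^2 ≤ ‖z t‖^2
    have h1 : ‖z (t + 1)‖ ^ 2 ≤ (ρ * ‖z t‖) ^ 2 := by
      have h2 : ρ ^ 2 * ((1 + lmin / lmax) * ‖z (t + 1)‖ ^ 2) ≤ ρ ^ 2 * ‖z t‖ ^ 2 :=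
        mul_le_mul_of_nonneg_left hkey (sq_nonneg ρ)
      have h3 : ‖z (t + 1)‖ ^ 2 * 1 ≤ ‖z (t + 1)‖ ^ 2 * (ρ ^ 2 * (1 + lmin / lmax)) :=
        mul_le_mul_of_nonneg_left hρsq (sq_nonneg _)
      calc ‖z (t + 1)‖ ^ 2 = ‖z (t + 1)‖ ^ 2 * 1 := by ring
        _ ≤ ‖z (t + 1)‖ ^ 2 * (ρ ^ 2 * (1 + lmin / lmax)) := h3
        _ = ρ ^ 2 * ((1 + lmin / lmax) * ‖z (t + 1)‖ ^ 2) := by ring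
        _ ≤ ρ ^ 2 * ‖z t‖ ^ 2 := h2
        _ = (ρ * ‖z t‖) ^ 2 := by ring
    have hρz : 0 ≤ ρ * ‖z t‖ := mul_nonneg hρpos.le (norm_nonneg _)
    nlinarith [norm_nonneg (z (t + 1))]
  refine ⟨fun t => hcontract t, ?_⟩
  -- geometric decay
  have hr0 : 0 ≤ r := le_trans (norm_nonneg _) h0
  have hgeom : ∀ T : ℕ, ‖z T‖ ≤ ρ ^ T * r := by
    intro T
    induction T with
    | zero => simpa using h0
    | succ T ih =>
      calc ‖z (T + 1)‖ ≤ ρ * ‖z T‖ := hcontract T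
        _ ≤ ρ * (ρ ^ T * r) := mul_le_mul_of_nonneg_left ih hρpos.le
        _ = ρ ^ (T + 1) * r := by ring
  intro T hT
  by_cases hre : r ≤ ε
  · calc ‖z T‖ ≤ ρ ^ T * r := hgeom T
      _ ≤ 1 * r := mul_le_mul_of_nonneg_right (pow_le_one₀ hρpos.le hρlt1.le) hr0
      _ = r := one_mul r
      _ ≤ ε := hre
  push_neg at hre
  have hrpos : 0 < r := lt_trans hε hre
  have hL : 0 < Real.log (r / ε) := Real.log_pos (by rw [lt_div_iff₀ hε]; linarith)
  have hT' : (2 + Real.sqrt 2) * (lmax / lmin) * Real.log (r / ε) ≤ (T : ℝ) := by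
    have h := Int.ceil_le.mp hT
    exact_mod_cast h
  set t := lmin / lmax with htdef
  set a := 1 - 1 / Real.sqrt 2 with hadef
  have hlogρ : Real.log ρ ≤ -(a * t) := by
    have h := Real.log_le_sub_one_of_pos hρpos
    rw [hρdef] at h ⊢
    linarith
  have hid : (2 + Real.sqrt 2) * (lmax / lmin) * (a * t) = 1 := by
    rw [hadef, htdef]
    have hs0 : Real.sqrt 2 ≠ 0 := by positivity
    field_simp
    linear_combination hs2
  have hTlog : (T : ℝ) * Real.log ρ ≤ -Real.log (r / ε) := by
    have hat : 0 < a * t := mul_pos ha0 hκ0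
    have hstep1 : (T : ℝ) * Real.log ρ ≤ (T : ℝ) * (-(a * t)) :=
      mul_le_mul_of_nonneg_left hlogρ (Nat.cast_nonneg T)
    have hstep2 : (T : ℝ) * (-(a * t))
        ≤ ((2 + Real.sqrt 2) * (lmax / lmin) * Real.log (r / ε)) * (-(a * t)) := by
      apply mul_le_mul_of_nonpos_right hT'
      linarith
    have hstep3 : ((2 + Real.sqrt 2) * (lmax / lmin) * Real.log (r / ε)) * (-(a * t))
        = -Real.log (r / ε) := by
      have : ((2 + Real.sqrt 2) * (lmax / lmin) * Real.log (r / ε)) * (-(a * t))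
          = -(((2 + Real.sqrt 2) * (lmax / lmin) * (a * t)) * Real.log (r / ε)) := by ring
      rw [this, hid, one_mul]
    exact le_of_le_of_eq (le_trans hstep1 hstep2) hstep3
  have hpow : ρ ^ T ≤ ε / r := by
    have h1 : ρ ^ T = Real.exp ((T : ℝ) * Real.log ρ) := by
      rw [← Real.exp_log hρpos, ← Real.exp_nat_mul, Real.exp_log hρpos]
    have h2 : -Real.log (r / ε) = Real.log (ε / r) := by
      rw [← Real.log_inv, inv_div]
    rw [h1]
    calc Real.exp ((T : ℝ) * Real.log ρ) ≤ Real.exp (-Real.log (r / ε)) :=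
          Real.exp_le_exp.mpr hTlog
      _ = ε / r := by rw [h2, Real.exp_log (div_pos hε hrpos)]
  calc ‖z T‖ ≤ ρ ^ T * r := hgeom T
    _ ≤ (ε / r) * r := mul_le_mul_of_nonneg_right hpow hr0
    _ = ε := div_mul_cancel₀ ε (ne_of_gt hrpos)
end
end
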